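/- Consider a parallel-edge network with finite nonempty edge set E, each edge e from s to t with transit time τ_e > 0 and capacity ν_e > 0, a finite player set P with supply rates d_j > 0, and time horizon H > 0, where players receive the information (θ, T(θ)) consisting of the current time and current exit times. Let every player use the strategy ḡ given by: ḡ_{e,j}(θ, T) = ν_e / ∑_{e'∈E'(T)} ν_{e'} if e ∈ E'(T); ḡ_{e,j}(θ, T) = 0 if E'(T) ≠ ∅ and e ∉ E'(T); and ḡ_{e,j}(θ, T) = ν_e / ∑_{e'∈E} ν_{e'} if E'(T) = ∅, where E'(T) = {e ∈ E : T_e < H}. Then in the feasible flow over time induced by this strategy profile, the sum of the players' payoffs equals the system optimum: ∑_{j∈P} ρ_j = Opt. -/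

import Mathlib

open MeasureTheory

/-- A flow over time on a parallel-edge network with edge set `E` (edges from `s` to `t`,
with transit times `τ` and capacities `ν`), player set `P` with supply rates `d`, and time
horizon `H`: a family of nonnegative Lebesgue-integrable in- and outflow rate functions
(extended by `0` outside the time horizon) satisfying flow conservation
`∑ e, f⁺ e j θ = d j`. -/
structure FlowOverTime (E P : Type) [Fintype E] [Fintype P]
    (τ ν : E → ℝ) (d : P → ℝ) (H : ℝ) where
  /-- inflow rates `f⁺_{e,j}` -/
  fin : E → P → ℝ → ℝ
  /-- outflow rates `f⁻_{e,j}` -/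
  fout : E → P → ℝ → ℝ
  fin_nonneg : ∀ e j θ, 0 ≤ fin e j θ
  fout_nonneg : ∀ e j θ, 0 ≤ fout e j θ
  fin_supp : ∀ e j θ, θ ∉ Set.Ico (0 : ℝ) H → fin e j θ = 0
  fout_supp : ∀ e j θ, θ ∉ Set.Ico (τ e) H → fout e j θ = 0
  fin_integrable : ∀ e j, Integrable (fin e j)
  fout_integrable : ∀ e j, Integrable (fout e j)
  conservation : ∀ j θ, θ ∈ Set.Ico (0 : ℝ) H → ∑ e, fin e j θ = d j

namespace FlowOverTime

variable {E P : Type} [Fintype E] [Fintype P] {τ ν : E → ℝ} {d : P → ℝ} {H : ℝ}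

/-- Cumulative inflow `F⁺_{e,j}(θ) = ∫₀^θ f⁺_{e,j}`. -/
noncomputable def Fplus (f : FlowOverTime E P τ ν d H) (e : E) (j : P) (θ : ℝ) : ℝ :=
  ∫ t in (0:ℝ)..θ, f.fin e j t

/-- Cumulative outflow `F⁻_{e,j}(θ) = ∫₀^θ f⁻_{e,j}`. -/
noncomputable def Fminus (f : FlowOverTime E P τ ν d H) (e : E) (j : P) (θ : ℝ) : ℝ :=
  ∫ t in (0:ℝ)..θ, f.fout e j t

/-- Queue length `z_e(θ) = ∑_j F⁺_{e,j}(θ) − ∑_j F⁻_{e,j}(θ + τ_e)`. -/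
noncomputable def queue (f : FlowOverTime E P τ ν d H) (e : E) (θ : ℝ) : ℝ :=
  ∑ j, f.Fplus e j θ - ∑ j, f.Fminus e j (θ + τ e)

/-- Exit time `T_e(θ) = θ + z_e(θ)/ν_e + τ_e`. -/
noncomputable def exitTime (f : FlowOverTime E P τ ν d H) (e : E) (θ : ℝ) : ℝ :=
  θ + f.queue e θ / ν e + τ e

open Classical in
/-- Feasibility of a flow over time: non-deficit constraints, the deterministic queuing
condition (edges operate at capacity while the queue is nonempty), and fair merging of
the players' flows (a player's share of the outflow at time `θ` equals her share of the
inflow at time `φ = max T_e⁻¹(θ)`). -/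
def Feasible (f : FlowOverTime E P τ ν d H) : Prop :=
  (∀ e j θ, θ ∈ Set.Ico (0:ℝ) (H - τ e) → f.Fminus e j (θ + τ e) ≤ f.Fplus e j θ) ∧
  (∀ e θ, θ ∈ Set.Ico (0:ℝ) (H - τ e) →
      ∑ j, f.fout e j (θ + τ e) =
        if 0 < f.queue e θ then ν e else min (∑ j, f.fin e j θ) (ν e)) ∧
  (∀ e j θ, θ ∈ Set.Ico (0:ℝ) H → ∀ φ : ℝ,
      IsGreatest {ϑ : ℝ | ϑ ∈ Set.Ico (0:ℝ) H ∧ f.exitTime e ϑ = θ} φ →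
      f.fout e j θ =
        if 0 < ∑ j', f.fin e j' φ
        then (f.fin e j φ / ∑ j', f.fin e j' φ) * ∑ j', f.fout e j' θ
        else 0)

/-- Payoff of player `j`: the amount `∑_e F⁻_{e,j}(H)` of her flow arriving at `t`
before time `H`. -/
noncomputable def payoff (f : FlowOverTime E P τ ν d H) (j : P) : ℝ :=
  ∑ e, f.Fminus e j H

end FlowOverTime

open Classical in
/-- The set of active edges `E'(T) = {e ∈ E : T_e < H}` for a vector of exit times `T`. -/
noncomputable def activeEdges {E : Type} [Fintype E] (H : ℝ) (T : E → ℝ) : Finset E :=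
  Finset.univ.filter (fun e => T e < H)

open Classical in
/-- The strategy `ḡ`: route proportionally to the capacities of the active edges, and
proportionally to all capacities if no edge is active. -/
noncomputable def gbar {E : Type} [Fintype E] (ν : E → ℝ) (H : ℝ)
    (T : E → ℝ) (e : E) : ℝ :=
  if e ∈ activeEdges H T then ν e / ∑ e' ∈ activeEdges H T, ν e'
  else if (activeEdges H T).Nonempty then 0
  else ν e / ∑ e', ν e'

/-- A function of an information state `(θ, T)` is right-Lipschitz if around every point
it is Lipschitz with respect to coordinate-wise nonnegative small perturbations. -/
def RightLipschitz {E : Type} [Fintype E] (g : ℝ → (E → ℝ) → ℝ) : Prop :=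
  ∀ (θ : ℝ) (T : E → ℝ), ∃ L > (0:ℝ), ∃ ε > (0:ℝ), ∀ (δ : ℝ) (x : E → ℝ),
    δ ∈ Set.Icc (0:ℝ) ε → (∀ e, x e ∈ Set.Icc (0:ℝ) ε) →
    |g θ T - g (θ + δ) (fun e => T e + x e)| ≤ L * ‖(δ, x)‖

/-- An admissible strategy with information on exit times: a right-Lipschitz function
`g : [0, H) × ℝ≥0^E → [0, 1]^E` whose components sum to `1`. -/
def Admissible {E : Type} [Fintype E] (g : ℝ → (E → ℝ) → E → ℝ) : Prop :=
  (∀ e, RightLipschitz (fun θ T => g θ T e)) ∧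
  (∀ θ T e, g θ T e ∈ Set.Icc (0:ℝ) 1) ∧
  (∀ θ T, ∑ e, g θ T e = 1)

/-- The feasible flow over time induced by a strategy profile `G` with information on
exit times: player `j` sends flow into edge `e` at rate
`f⁺_{e,j}(θ) = d_j · g_{e,j}(θ, T(θ))` where `T(θ)` is the current exit-time vector. -/
def FlowOverTime.InducedBy {E P : Type} [Fintype E] [Fintype P]
    {τ ν : E → ℝ} {d : P → ℝ} {H : ℝ}
    (f : FlowOverTime E P τ ν d H) (G : P → ℝ → (E → ℝ) → E → ℝ) : Prop :=
  f.Feasible ∧ ∀ e j θ, θ ∈ Set.Ico (0:ℝ) H →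
    f.fin e j θ = d j * G j θ (fun e' => f.exitTime e' θ) e

section Aux

open Set

variable {E P : Type} [Fintype E] [Fintype P] {τ ν : E → ℝ} {d : P → ℝ} {H : ℝ}

/-- Integral of a function equal to a constant on the open interval. -/
lemma integral_eq_mul_of_eqOn {g : ℝ → ℝ} (hg : Integrable g) {x y c : ℝ} (hxy : x ≤ y)
    (h : ∀ t ∈ Set.Ioo x y, g t = c) : ∫ t in x..y, g t = c * (y - x) := by
  rw [intervalIntegral.integral_of_le hxy, integral_Ioc_eq_integral_Ioo,
    setIntegral_congr_fun measurableSet_Ioo h, setIntegral_const, Real.volume_real_Ioo_of_le hxy,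
    smul_eq_mul, mul_comm]

namespace FlowOverTime

/-- Total inflow rate into edge `e`. -/
noncomputable def aT (f : FlowOverTime E P τ ν d H) (e : E) (θ : ℝ) : ℝ := ∑ j, f.fin e j θ

/-- Total outflow rate out of edge `e`. -/
noncomputable def bT (f : FlowOverTime E P τ ν d H) (e : E) (t : ℝ) : ℝ := ∑ j, f.fout e j t

/-- Total cumulative inflow. -/
noncomputable def AT (f : FlowOverTime E P τ ν d H) (e : E) (θ : ℝ) : ℝ :=
  ∫ t in (0:ℝ)..θ, f.aT e t

/-- Total cumulative outflow. -/
noncomputable def BT (f : FlowOverTime E P τ ν d H) (e : E) (θ : ℝ) : ℝ :=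
  ∫ t in (0:ℝ)..θ, f.bT e t

variable (f : FlowOverTime E P τ ν d H)

lemma aT_nonneg (e : E) (θ : ℝ) : 0 ≤ f.aT e θ :=
  Finset.sum_nonneg fun j _ => f.fin_nonneg e j θ

lemma bT_nonneg (e : E) (t : ℝ) : 0 ≤ f.bT e t :=
  Finset.sum_nonneg fun j _ => f.fout_nonneg e j t

lemma aT_integrable (e : E) : Integrable (f.aT e) :=
  integrable_finset_sum _ fun j _ => f.fin_integrable e j

lemma bT_integrable (e : E) : Integrable (f.bT e) :=
  integrable_finset_sum _ fun j _ => f.fout_integrable e j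

lemma AT_eq_sum (e : E) (θ : ℝ) : f.AT e θ = ∑ j, f.Fplus e j θ := by
  unfold AT aT Fplus
  exact intervalIntegral.integral_finset_sum fun j _ => (f.fin_integrable e j).intervalIntegrable

lemma BT_eq_sum (e : E) (θ : ℝ) : f.BT e θ = ∑ j, f.Fminus e j θ := by
  unfold BT bT Fminus
  exact intervalIntegral.integral_finset_sum fun j _ => (f.fout_integrable e j).intervalIntegrable

lemma queue_eq (e : E) (θ : ℝ) : f.queue e θ = f.AT e θ - f.BT e (θ + τ e) := by
  rw [queue, AT_eq_sum, BT_eq_sum]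

lemma exitTime_eq (e : E) (θ : ℝ) :
    f.exitTime e θ = θ + (f.AT e θ - f.BT e (θ + τ e)) / ν e + τ e := by
  rw [exitTime, queue_eq]

lemma AT_add (e : E) (x y : ℝ) : f.AT e y = f.AT e x + ∫ t in x..y, f.aT e t := by
  rw [AT, AT, intervalIntegral.integral_add_adjacent_intervals
    (f.aT_integrable e).intervalIntegrable (f.aT_integrable e).intervalIntegrable]

lemma BT_add (e : E) (x y : ℝ) : f.BT e y = f.BT e x + ∫ t in x..y, f.bT e t := by
  rw [BT, BT, intervalIntegral.integral_add_adjacent_intervals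
    (f.bT_integrable e).intervalIntegrable (f.bT_integrable e).intervalIntegrable]

lemma AT_mono (e : E) {x y : ℝ} (hxy : x ≤ y) : f.AT e x ≤ f.AT e y := by
  rw [f.AT_add e x y]
  have : 0 ≤ ∫ t in x..y, f.aT e t :=
    intervalIntegral.integral_nonneg hxy fun u _ => f.aT_nonneg e u
  linarith

lemma BT_mono (e : E) {x y : ℝ} (hxy : x ≤ y) : f.BT e x ≤ f.BT e y := by
  rw [f.BT_add e x y]
  have : 0 ≤ ∫ t in x..y, f.bT e t :=
    intervalIntegral.integral_nonneg hxy fun u _ => f.bT_nonneg e u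
  linarith

lemma AT_nonneg (e : E) {θ : ℝ} (hθ : 0 ≤ θ) : 0 ≤ f.AT e θ := by
  have := f.AT_mono e hθ
  simpa [AT] using this

lemma BT_nonneg' (e : E) {θ : ℝ} (hθ : 0 ≤ θ) : 0 ≤ f.BT e θ := by
  have := f.BT_mono e hθ
  simpa [BT] using this

lemma contAT (e : E) : Continuous (f.AT e) :=
  intervalIntegral.continuous_primitive (fun _ _ => (f.aT_integrable e).intervalIntegrable) 0

lemma contBT (e : E) : Continuous (f.BT e) :=
  intervalIntegral.continuous_primitive (fun _ _ => (f.bT_integrable e).intervalIntegrable) 0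

/-- Pointwise capacity bound on the total outflow rate. -/
lemma bT_le (hfeas : f.Feasible) (e : E) (hνe : 0 < ν e) (t : ℝ) : f.bT e t ≤ ν e := by
  by_cases ht : t ∈ Set.Ico (τ e) H
  · have h1 : t - τ e ∈ Set.Ico (0:ℝ) (H - τ e) := by
      constructor <;> [linarith [ht.1]; linarith [ht.2]]
    have h2 := hfeas.2.1 e (t - τ e) h1
    have h3 : t - τ e + τ e = t := by ring
    rw [h3] at h2
    rw [bT, h2]
    split_ifs
    · exact le_rfl
    · exact min_le_right _ _
  · have : ∀ j, f.fout e j t = 0 := fun j => f.fout_supp e j t ht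
    simp [bT, this, hνe.le]

end FlowOverTime
end Aux
section Aux2
open Set
variable {E P : Type} [Fintype E] [Fintype P] {τ ν : E → ℝ} {d : P → ℝ} {H : ℝ}
namespace FlowOverTime
variable (f : FlowOverTime E P τ ν d H)

lemma BT_lip (hfeas : f.Feasible) (e : E) (hνe : 0 < ν e) {x y : ℝ} (hxy : x ≤ y) :
    f.BT e y ≤ f.BT e x + ν e * (y - x) := by
  rw [f.BT_add e x y]
  have h1 : ∫ t in x..y, f.bT e t ≤ ∫ t in x..y, (fun _ => ν e) t :=
    intervalIntegral.integral_mono_on hxy (f.bT_integrable e).intervalIntegrable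
      intervalIntegrable_const (fun t _ => f.bT_le hfeas e hνe t)
  have h2 : ∫ t in x..y, (fun _ => ν e) t = (y - x) * ν e := by
    simp [intervalIntegral.integral_const]
  rw [h2] at h1; linarith

/-- Nonnegativity of queues. -/
lemma znn (hfeas : f.Feasible) (e : E) {θ : ℝ} (hθ : 0 ≤ θ) :
    f.BT e (θ + τ e) ≤ f.AT e θ := by
  have hcore : ∀ u ∈ Set.Ico (0:ℝ) (H - τ e), f.BT e (u + τ e) ≤ f.AT e u := by
    intro u hu
    rw [AT_eq_sum, BT_eq_sum]
    exact Finset.sum_le_sum fun j _ => hfeas.1 e j u hu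
  by_cases hcase : θ < H - τ e
  · exact hcore θ ⟨hθ, hcase⟩
  · push_neg at hcase
    by_cases hHτ : H ≤ τ e
    · have hb0 : ∀ t, f.bT e t = 0 := by
        intro t
        have : ∀ j, f.fout e j t = 0 := fun j => f.fout_supp e j t (by
          intro hmem; exact absurd (lt_of_le_of_lt (hHτ.trans hmem.1) hmem.2) (lt_irrefl _))
        simp [bT, this]
      have hB0 : f.BT e (θ + τ e) = 0 := by simp [BT, hb0]
      rw [hB0]; exact f.AT_nonneg e hθ
    · push_neg at hHτ
      have h0 : (0:ℝ) < H - τ e := by linarith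
      have hstep1 : f.BT e (θ + τ e) = f.BT e H := by
        rw [f.BT_add e H (θ + τ e)]
        have hle : H ≤ θ + τ e := by linarith
        have hz : ∫ t in H..(θ + τ e), f.bT e t = 0 * (θ + τ e - H) := by
          apply integral_eq_mul_of_eqOn (f.bT_integrable e) hle
          intro t ht
          have : ∀ j, f.fout e j t = 0 := fun j => f.fout_supp e j t (by
            intro hmem; exact absurd ht.1 (not_lt.mpr hmem.2.le))
          simp [bT, this]
        rw [hz]; ring
      have hstep2 : f.BT e H ≤ f.AT e (H - τ e) := by
        have hclosed : IsClosed {u : ℝ | f.BT e (u + τ e) ≤ f.AT e u} :=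
          isClosed_le ((f.contBT e).comp (continuous_id.add continuous_const)) (f.contAT e)
        have hsub : Set.Ico (0:ℝ) (H - τ e) ⊆ {u : ℝ | f.BT e (u + τ e) ≤ f.AT e u} := hcore
        have hIcc : Set.Icc (0:ℝ) (H - τ e) ⊆ {u : ℝ | f.BT e (u + τ e) ≤ f.AT e u} := by
          rw [← closure_Ico h0.ne]
          exact hclosed.closure_subset_iff.mpr hsub
        have hmem := hIcc ⟨h0.le, le_rfl⟩
        simpa [sub_add_cancel] using hmem
      calc f.BT e (θ + τ e) = f.BT e H := hstep1
        _ ≤ f.AT e (H - τ e) := hstep2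
        _ ≤ f.AT e θ := f.AT_mono e hcase

lemma queue_nonneg (hfeas : f.Feasible) (e : E) {θ : ℝ} (hθ : 0 ≤ θ) :
    0 ≤ f.queue e θ := by
  rw [queue_eq]; linarith [f.znn hfeas e hθ]

lemma contT (e : E) : Continuous (f.exitTime e) := by
  have h : f.exitTime e = fun θ => θ + (f.AT e θ - f.BT e (θ + τ e)) / ν e + τ e :=
    funext fun θ => f.exitTime_eq e θ
  rw [h]
  exact (continuous_id.add (((f.contAT e).sub
    ((f.contBT e).comp (continuous_id.add continuous_const))).div_const _)).add continuous_const

/-- FIFO: all flow that entered by time `θ` with `T_e(θ) ≤ H` leaves by time `H`. -/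
lemma fifo (hfeas : f.Feasible) (e : E) (hνe : 0 < ν e) {θ : ℝ} (hθ : 0 ≤ θ)
    (hT : f.exitTime e θ ≤ H) : f.AT e θ ≤ f.BT e H := by
  have hz0 : 0 ≤ f.queue e θ := f.queue_nonneg hfeas e hθ
  have hTval : f.exitTime e θ = θ + f.queue e θ / ν e + τ e := rfl
  have hdiv : 0 ≤ f.queue e θ / ν e := div_nonneg hz0 hνe.le
  have hτθH : θ + τ e ≤ f.exitTime e θ := by rw [hTval]; linarith
  have hint : ∫ t in (θ + τ e)..(f.exitTime e θ), f.bT e t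
      = ν e * (f.exitTime e θ - (θ + τ e)) := by
    apply integral_eq_mul_of_eqOn (f.bT_integrable e) hτθH
    intro t ht
    obtain ⟨ht1, ht2⟩ := ht
    have hu1 : θ < t - τ e := by linarith
    have hu0 : (0:ℝ) ≤ t - τ e := by linarith
    have huH : t - τ e ∈ Set.Ico (0:ℝ) (H - τ e) := by
      refine ⟨hu0, ?_⟩
      have : t < H := lt_of_lt_of_le ht2 hT
      linarith
    have hub : ν e * (t - τ e - θ) < f.queue e θ := by
      have h1 : t - τ e - θ < f.queue e θ / ν e := by
        rw [hTval] at ht2; linarith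
      calc ν e * (t - τ e - θ) < ν e * (f.queue e θ / ν e) := by
            exact (mul_lt_mul_iff_right₀ hνe).mpr h1
        _ = f.queue e θ := by field_simp
    have hq : 0 < f.queue e (t - τ e) := by
      rw [queue_eq]
      have hA : f.AT e θ ≤ f.AT e (t - τ e) := f.AT_mono e hu1.le
      have hB : f.BT e (t - τ e + τ e) ≤ f.BT e (θ + τ e) + ν e * (t - τ e + τ e - (θ + τ e)) :=
        f.BT_lip hfeas e hνe (by linarith)
      have hzθ : f.queue e θ = f.AT e θ - f.BT e (θ + τ e) := f.queue_eq e θ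
      have : ν e * (t - τ e + τ e - (θ + τ e)) = ν e * (t - τ e - θ) := by ring_nf
      rw [this] at hB
      linarith
    have h2 := hfeas.2.1 e (t - τ e) huH
    rw [if_pos hq] at h2
    have ht' : t - τ e + τ e = t := by ring
    rw [ht'] at h2
    exact h2
  have hBTθτ : f.BT e (θ + τ e) = f.AT e θ - f.queue e θ := by
    have := f.queue_eq e θ; linarith
  have hadd := f.BT_add e (θ + τ e) (f.exitTime e θ)
  rw [hint, hBTθτ] at hadd
  have hTsub : f.exitTime e θ - (θ + τ e) = f.queue e θ / ν e := by rw [hTval]; ring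
  have hBTT : f.BT e (f.exitTime e θ) = f.AT e θ := by
    rw [hadd, hTsub]; field_simp; ring
  calc f.AT e θ = f.BT e (f.exitTime e θ) := hBTT.symm
    _ ≤ f.BT e H := f.BT_mono e hT

/-- Once an edge's exit time has reached `H`, it stays at least `H`. -/
lemma absorbing (hfeas : f.Feasible) (e : E) (hνe : 0 < ν e) {θ₁ θ₂ : ℝ}
    (h1 : 0 ≤ θ₁) (h12 : θ₁ ≤ θ₂) (h2H : θ₂ < H) (hT1 : H ≤ f.exitTime e θ₁) :
    H ≤ f.exitTime e θ₂ := by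
  by_contra hT2
  push_neg at hT2
  set S := {u : ℝ | u ∈ Set.Icc θ₁ θ₂ ∧ H ≤ f.exitTime e u} with hS
  have hSne : S.Nonempty := ⟨θ₁, ⟨le_rfl, h12⟩, hT1⟩
  have hSbdd : BddAbove S := ⟨θ₂, fun u hu => hu.1.2⟩
  have hSclosed : IsClosed S := by
    apply IsClosed.inter isClosed_Icc
    exact isClosed_le continuous_const (f.contT e)
  set s := sSup S with hsdef
  have hsS : s ∈ S := hSclosed.csSup_mem hSne hSbdd
  have hs2 : s ≤ θ₂ := hsS.1.2
  have hsT : H ≤ f.exitTime e s := hsS.2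
  have hslt : s < θ₂ := lt_of_le_of_ne hs2 (fun h => absurd (h ▸ hsT) (not_le.mpr hT2))
  have hs0 : 0 ≤ s := h1.trans hsS.1.1
  have hTlt : ∀ u, s < u → u ≤ θ₂ → f.exitTime e u < H := by
    intro u hsu hu2
    by_contra hge
    push_neg at hge
    have hu : u ∈ S := ⟨⟨hsS.1.1.trans hsu.le, hu2⟩, hge⟩
    exact absurd (le_csSup hSbdd hu) (not_le.mpr hsu)
  have hz0 : 0 ≤ f.queue e s := f.queue_nonneg hfeas e hs0
  by_cases hzpos : 0 < f.queue e s
  · -- queue positive at s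
    set ε := min (f.queue e s / (2 * ν e)) (θ₂ - s) with hε
    have hεpos : 0 < ε := lt_min (by positivity) (by linarith)
    have hεz : ε ≤ f.queue e s / (2 * ν e) := min_le_left _ _
    have hε2 : ε ≤ θ₂ - s := min_le_right _ _
    set θ := s + ε with hθdef
    have hθ2 : θ ≤ θ₂ := by rw [hθdef]; linarith
    have hθs : s < θ := by rw [hθdef]; linarith
    have hb : ∀ t ∈ Set.Ioo (s + τ e) (θ + τ e), f.bT e t = ν e := by
      intro t ht
      obtain ⟨ht1, ht2⟩ := ht
      have hu1 : s < t - τ e := by linarith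
      have hu2 : t - τ e < θ := by linarith
      have huθ2 : t - τ e ≤ θ₂ := by linarith
      have hu0 : (0:ℝ) ≤ t - τ e := by linarith
      have hTu : f.exitTime e (t - τ e) < H := hTlt _ hu1 huθ2
      have hq : 0 < f.queue e (t - τ e) := by
        rw [queue_eq]
        have hA : f.AT e s ≤ f.AT e (t - τ e) := f.AT_mono e hu1.le
        have hB : f.BT e (t - τ e + τ e) ≤ f.BT e (s + τ e) + ν e * (t - τ e + τ e - (s + τ e)) :=
          f.BT_lip hfeas e hνe (by linarith)
        have hzs : f.queue e s = f.AT e s - f.BT e (s + τ e) := f.queue_eq e s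
        have hbound : ν e * (t - τ e + τ e - (s + τ e)) ≤ ν e * ε := by
          apply mul_le_mul_of_nonneg_left _ hνe.le
          linarith
        have hεb : ν e * ε ≤ f.queue e s / 2 := by
          calc ν e * ε ≤ ν e * (f.queue e s / (2 * ν e)) :=
                mul_le_mul_of_nonneg_left hεz hνe.le
            _ = f.queue e s / 2 := by field_simp
        linarith
      have huIco : t - τ e ∈ Set.Ico (0:ℝ) (H - τ e) := by
        refine ⟨hu0, ?_⟩
        have hqnn : 0 ≤ f.queue e (t - τ e) := hq.le
        have : t - τ e + τ e ≤ f.exitTime e (t - τ e) := by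
          have : f.exitTime e (t - τ e) = (t - τ e) + f.queue e (t - τ e) / ν e + τ e := rfl
          rw [this]
          have := div_nonneg hqnn hνe.le
          linarith
        linarith
      have h2 := hfeas.2.1 e (t - τ e) huIco
      rw [if_pos hq] at h2
      have ht' : t - τ e + τ e = t := by ring
      rw [ht'] at h2
      exact h2
    have hint : f.BT e (θ + τ e) = f.BT e (s + τ e) + ν e * (θ - s) := by
      rw [f.BT_add e (s + τ e) (θ + τ e),
        integral_eq_mul_of_eqOn (f.bT_integrable e) (by linarith) hb]
      ring
    have hTθ : f.exitTime e θ < H := hTlt θ hθs hθ2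
    have hmono : f.exitTime e s ≤ f.exitTime e θ := by
      rw [f.exitTime_eq e s, f.exitTime_eq e θ, hint]
      have hA : f.AT e s ≤ f.AT e θ := f.AT_mono e hθs.le
      have key : (f.AT e θ - (f.BT e (s + τ e) + ν e * (θ - s))) / ν e
          = (f.AT e θ - f.BT e (s + τ e)) / ν e - (θ - s) := by
        field_simp; ring
      rw [key]
      have hdivle : (f.AT e s - f.BT e (s + τ e)) / ν e
          ≤ (f.AT e θ - f.BT e (s + τ e)) / ν e := by
        exact (div_le_div_iff_of_pos_right hνe).mpr (by linarith)
      linarith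
    linarith
  · -- queue zero at s
    have hz : f.queue e s = 0 := le_antisymm (not_lt.mp hzpos) hz0
    have hTs : f.exitTime e s = s + τ e := by
      have : f.exitTime e s = s + f.queue e s / ν e + τ e := rfl
      rw [this, hz]; simp
    have hq2 : 0 ≤ f.queue e θ₂ := f.queue_nonneg hfeas e (h1.trans h12)
    have : H ≤ f.exitTime e θ₂ := by
      have hT2' : f.exitTime e θ₂ = θ₂ + f.queue e θ₂ / ν e + τ e := rfl
      have := div_nonneg hq2 hνe.le
      rw [hT2']
      rw [hTs] at hsT
      linarith
    exact absurd this (not_le.mpr hT2)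

end FlowOverTime
end Aux2
section Aux3
open Set
variable {E P : Type} [Fintype E] [Fintype P] {τ ν : E → ℝ} {d : P → ℝ} {H : ℝ}

/-- Integral bound from a pointwise bound on the open interval. -/
lemma integral_le_mul_of_le_on {g : ℝ → ℝ} (hg : Integrable g) {x y c : ℝ} (hxy : x ≤ y)
    (h : ∀ t ∈ Set.Ioo x y, g t ≤ c) : ∫ t in x..y, g t ≤ c * (y - x) := by
  rw [intervalIntegral.integral_of_le hxy, integral_Ioc_eq_integral_Ioo]
  have h1 : ∫ t in Set.Ioo x y, g t ≤ ∫ _t in Set.Ioo x y, c :=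
    setIntegral_mono_on hg.integrableOn
      (integrableOn_const (by rw [Real.volume_Ioo]; exact ENNReal.ofReal_ne_top))
      measurableSet_Ioo h
  rw [setIntegral_const, Real.volume_real_Ioo_of_le hxy,
    smul_eq_mul, mul_comm] at h1
  exact h1

namespace FlowOverTime
variable (f : FlowOverTime E P τ ν d H)

/-- The set of active edges at time `θ`. -/
noncomputable def Act (f : FlowOverTime E P τ ν d H) (θ : ℝ) : Finset E :=
  activeEdges H fun e' => f.exitTime e' θ

/-- Total capacity of the active edges at time `θ`. -/
noncomputable def vact (f : FlowOverTime E P τ ν d H) (θ : ℝ) : ℝ :=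
  ∑ e' ∈ f.Act θ, ν e'

lemma mem_Act {e : E} {θ : ℝ} : e ∈ f.Act θ ↔ f.exitTime e θ < H := by
  simp [Act, activeEdges]

lemma contQ (e : E) : Continuous (f.queue e) := by
  have h : f.queue e = fun θ => f.AT e θ - f.BT e (θ + τ e) := funext fun θ => f.queue_eq e θ
  rw [h]
  exact (f.contAT e).sub ((f.contBT e).comp (continuous_id.add continuous_const))

lemma AT_zero (e : E) : f.AT e 0 = 0 := by simp [AT]

lemma BT_at_tau (e : E) (hτe : 0 < τ e) : f.BT e (τ e) = 0 := by
  have h0 : f.BT e 0 = 0 := by simp [BT]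
  rw [f.BT_add e 0 (τ e), h0,
    integral_eq_mul_of_eqOn (f.bT_integrable e) hτe.le (c := 0) ?_]
  · ring
  · intro t ht
    have : ∀ j, f.fout e j t = 0 := fun j => f.fout_supp e j t (by
      intro hmem; exact absurd ht.2 (not_lt.mpr hmem.1))
    simp [bT, this]

lemma queue_at_zero (e : E) (hτe : 0 < τ e) : f.queue e 0 = 0 := by
  rw [queue_eq, zero_add, f.AT_zero e, f.BT_at_tau e hτe]; ring

lemma aT_induced (hind : f.InducedBy fun _ θ T e => gbar ν H T e) (e : E) {θ : ℝ} (hθ : θ ∈ Set.Ico (0:ℝ) H) :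
    f.aT e θ = (∑ j, d j) * gbar ν H (fun e' => f.exitTime e' θ) e := by
  unfold aT
  rw [Finset.sum_congr rfl fun j _ => hind.2 e j θ hθ, ← Finset.sum_mul]

lemma aT_active (hind : f.InducedBy fun _ θ T e => gbar ν H T e) (e : E) {θ : ℝ} (hθ : θ ∈ Set.Ico (0:ℝ) H)
    (he : f.exitTime e θ < H) :
    f.aT e θ = (∑ j, d j) * (ν e / f.vact θ) := by
  rw [f.aT_induced hind e hθ]
  have hmem : e ∈ activeEdges H fun e' => f.exitTime e' θ := (f.mem_Act).mpr he
  rw [gbar, if_pos hmem]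
  rfl

lemma aT_inactive (hind : f.InducedBy fun _ θ T e => gbar ν H T e) (e : E) {θ : ℝ} (hθ : θ ∈ Set.Ico (0:ℝ) H)
    (he : ¬ f.exitTime e θ < H) (hne : (f.Act θ).Nonempty) : f.aT e θ = 0 := by
  rw [f.aT_induced hind e hθ]
  have hmem : e ∉ activeEdges H fun e' => f.exitTime e' θ := fun h => he ((f.mem_Act).mp h)
  rw [gbar, if_neg hmem,
    if_pos (show (activeEdges H fun e' => f.exitTime e' θ).Nonempty from hne), mul_zero]

/-- The time `α*` at which the capacity of the active edges drops below the total
supply rate. -/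
noncomputable def astar (f : FlowOverTime E P τ ν d H) : ℝ :=
  sInf (insert H {θ ∈ Set.Icc (0:ℝ) H | f.vact θ < ∑ j, d j})

lemma astar_lb (hH : 0 ≤ H) : ∀ x ∈ insert H {θ ∈ Set.Icc (0:ℝ) H | f.vact θ < ∑ j, d j},
    (0:ℝ) ≤ x := by
  rintro x (rfl | hx)
  · exact hH
  · exact hx.1.1

lemma astar_mem_Icc (hH : 0 ≤ H) : f.astar ∈ Set.Icc (0:ℝ) H := by
  constructor
  · exact le_csInf ⟨H, Set.mem_insert _ _⟩ (f.astar_lb hH)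
  · exact csInf_le ⟨0, f.astar_lb hH⟩ (Set.mem_insert _ _)

lemma vact_ge (hH : 0 ≤ H) {u : ℝ} (hu0 : 0 ≤ u) (hu : u < f.astar) :
    (∑ j, d j) ≤ f.vact u := by
  by_contra hlt
  push_neg at hlt
  have huH : u ≤ H := le_trans hu.le (f.astar_mem_Icc hH).2
  have hmem : u ∈ insert H {θ ∈ Set.Icc (0:ℝ) H | f.vact θ < ∑ j, d j} :=
    Set.mem_insert_of_mem _ ⟨⟨hu0, huH⟩, hlt⟩
  exact absurd (csInf_le ⟨0, f.astar_lb hH⟩ hmem) (not_le.mpr hu)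

lemma Act_nonempty_of_lt (hH : 0 ≤ H) (hD : 0 < ∑ j, d j) {u : ℝ} (hu0 : 0 ≤ u)
    (hu : u < f.astar) : (f.Act u).Nonempty := by
  rcases Finset.eq_empty_or_nonempty (f.Act u) with h | h
  · have : f.vact u = 0 := by rw [vact, h, Finset.sum_empty]
    have := f.vact_ge hH hu0 hu
    linarith
  · exact h

lemma vact_lt (hfeas : f.Feasible) (hν : ∀ e', 0 < ν e') (hH : 0 ≤ H) {u : ℝ}
    (hu : f.astar < u) (huH : u < H) : f.vact u < ∑ j, d j := by
  have hbdd : BddBelow (insert H {θ ∈ Set.Icc (0:ℝ) H | f.vact θ < ∑ j, d j}) :=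
    ⟨0, f.astar_lb hH⟩
  obtain ⟨b, hb, hbu⟩ := (csInf_lt_iff hbdd ⟨H, Set.mem_insert _ _⟩).mp hu
  rcases hb with rfl | hb
  · exact absurd huH (not_lt.mpr hbu.le)
  · have hb0 : 0 ≤ b := hb.1.1
    have hsub : f.Act u ⊆ f.Act b := by
      intro e' he'
      rw [f.mem_Act] at he' ⊢
      by_contra hge
      push_neg at hge
      exact absurd (f.absorbing hfeas e' (hν e') hb0 hbu.le huH hge) (not_le.mpr he')
    calc f.vact u ≤ f.vact b :=
          Finset.sum_le_sum_of_subset_of_nonneg hsub fun e' _ _ => (hν e').le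
      _ < ∑ j, d j := hb.2

/-- Before `α*` the queues of the (relevant) edges are empty. -/
lemma queue_zero_before (hind : f.InducedBy fun _ θ T e => gbar ν H T e)
    (hν : ∀ e', 0 < ν e') (hτ : ∀ e', 0 < τ e') (hH : 0 < H) (hD : 0 < ∑ j, d j) (e : E) (he : f.astar < H - τ e) {θ : ℝ}
    (hθ : θ ∈ Set.Icc 0 f.astar) : f.queue e θ = 0 := by
  have hfeas := hind.1
  have hθ0 : 0 ≤ θ := hθ.1
  by_contra hne
  have hpos : 0 < f.queue e θ := lt_of_le_of_ne (f.queue_nonneg hfeas e hθ0) (Ne.symm hne)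
  set S := {u : ℝ | u ∈ Set.Icc 0 θ ∧ f.queue e u ≤ 0} with hSdef
  have hSne : S.Nonempty := ⟨0, ⟨le_rfl, hθ0⟩, le_of_eq (f.queue_at_zero e (hτ e))⟩
  have hSbdd : BddAbove S := ⟨θ, fun u hu => hu.1.2⟩
  have hSclosed : IsClosed S :=
    IsClosed.inter isClosed_Icc (isClosed_le (f.contQ e) continuous_const)
  set s := sSup S with hsdef
  have hsS : s ∈ S := hSclosed.csSup_mem hSne hSbdd
  have hs0 : 0 ≤ s := hsS.1.1
  have hsθ : s ≤ θ := hsS.1.2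
  have hqs : f.queue e s = 0 := le_antisymm hsS.2 (f.queue_nonneg hfeas e hs0)
  have hsθ' : s < θ := by
    rcases lt_or_eq_of_le hsθ with h | h
    · exact h
    · exfalso; rw [h] at hqs; exact hne hqs
  have hqpos : ∀ u, s < u → u ≤ θ → 0 < f.queue e u := by
    intro u hsu huθ
    by_contra hle
    push_neg at hle
    have hu : u ∈ S := ⟨⟨hs0.trans hsu.le, huθ⟩, hle⟩
    exact absurd (le_csSup hSbdd hu) (not_le.mpr hsu)
  -- outflow at capacity on (s, θ)
  have hb : ∀ t ∈ Set.Ioo (s + τ e) (θ + τ e), f.bT e t = ν e := by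
    intro t ht
    obtain ⟨ht1, ht2⟩ := ht
    have hu1 : s < t - τ e := by linarith
    have hu2 : t - τ e < θ := by linarith
    have hq := hqpos (t - τ e) hu1 hu2.le
    have huIco : t - τ e ∈ Set.Ico (0:ℝ) (H - τ e) := ⟨by linarith,
      by have := hθ.2; linarith⟩
    have h2 := hfeas.2.1 e (t - τ e) huIco
    rw [if_pos hq] at h2
    have ht' : t - τ e + τ e = t := by ring
    rw [ht'] at h2
    exact h2
  -- inflow at most capacity on (s, θ)
  have ha : ∀ u ∈ Set.Ioo s θ, f.aT e u ≤ ν e := by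
    intro u hu
    have hu0 : 0 ≤ u := hs0.trans hu.1.le
    have huα : u < f.astar := lt_of_lt_of_le hu.2 hθ.2
    have huH : u < H := lt_of_lt_of_le huα (f.astar_mem_Icc hH.le).2
    by_cases hact : f.exitTime e u < H
    · rw [f.aT_active hind e ⟨hu0, huH⟩ hact]
      have hge := f.vact_ge hH.le hu0 huα
      have hv : 0 < f.vact u := lt_of_lt_of_le hD hge
      calc (∑ j, d j) * (ν e / f.vact u) = ν e * ((∑ j, d j) / f.vact u) := by ring
        _ ≤ ν e * 1 := mul_le_mul_of_nonneg_left ((div_le_one hv).mpr hge) (hν e).le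
        _ = ν e := mul_one _
    · rw [f.aT_inactive hind e ⟨hu0, huH⟩ hact
        (f.Act_nonempty_of_lt hH.le hD hu0 huα)]
      exact (hν e).le
  have hBint : f.BT e (θ + τ e) = f.BT e (s + τ e) + ν e * (θ - s) := by
    rw [f.BT_add e (s + τ e) (θ + τ e),
      integral_eq_mul_of_eqOn (f.bT_integrable e) (by linarith) hb]
    ring
  have hAint : f.AT e θ ≤ f.AT e s + ν e * (θ - s) := by
    rw [f.AT_add e s θ]
    have := integral_le_mul_of_le_on (f.aT_integrable e) hsθ'.le ha
    linarith
  have hqθ : f.queue e θ = f.AT e θ - f.BT e (θ + τ e) := f.queue_eq e θ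
  have hqs' : f.queue e s = f.AT e s - f.BT e (s + τ e) := f.queue_eq e s
  rw [hqs] at hqs'
  linarith [hpos, hqθ, hBint, hAint]

/-- Every edge has delivered at least its cumulative inflow at time `α*` by time `H`. -/
lemma AT_astar_le_BT (hind : f.InducedBy fun _ θ T e => gbar ν H T e)
    (hν : ∀ e', 0 < ν e') (hτ : ∀ e', 0 < τ e') (hH : 0 < H) (hD : 0 < ∑ j, d j) (e : E) : f.AT e f.astar ≤ f.BT e H := by
  have hfeas := hind.1
  have hα := f.astar_mem_Icc hH.le
  set α := f.astar with hαdef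
  set S := {u : ℝ | u ∈ Set.Icc 0 α ∧ f.exitTime e u ≤ H} with hSdef
  rcases Set.eq_empty_or_nonempty S with hSe | hSne
  · -- never active before α*
    have ha : ∀ u ∈ Set.Ioo (0:ℝ) α, f.aT e u = 0 := by
      intro u hu
      have huα : u < α := hu.2
      have hu0 : 0 ≤ u := hu.1.le
      have huH : u < H := lt_of_lt_of_le huα hα.2
      have hnm : ¬ f.exitTime e u < H := by
        intro hlt
        have : u ∈ S := ⟨⟨hu0, huα.le⟩, hlt.le⟩
        rw [hSe] at this
        exact this
      exact f.aT_inactive hind e ⟨hu0, huH⟩ hnm (f.Act_nonempty_of_lt hH.le hD hu0 huα)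
    have : f.AT e α = 0 := by
      rw [f.AT_add e 0 α, f.AT_zero e,
        integral_eq_mul_of_eqOn (f.aT_integrable e) hα.1 (c := 0) ha]
      ring
    rw [this]
    exact f.BT_nonneg' e hH.le
  · have hSbdd : BddAbove S := ⟨α, fun u hu => hu.1.2⟩
    have hSclosed : IsClosed S :=
      IsClosed.inter isClosed_Icc (isClosed_le (f.contT e) continuous_const)
    set σ := sSup S with hσdef
    have hσS : σ ∈ S := hSclosed.csSup_mem hSne hSbdd
    have hσ0 : 0 ≤ σ := hσS.1.1
    have hσα : σ ≤ α := hσS.1.2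
    have hfifo : f.AT e σ ≤ f.BT e H := f.fifo hfeas e (hν e) hσ0 hσS.2
    have ha : ∀ u ∈ Set.Ioo σ α, f.aT e u = 0 := by
      intro u hu
      have hu0 : 0 ≤ u := hσ0.trans hu.1.le
      have huα : u < α := hu.2
      have huH : u < H := lt_of_lt_of_le huα hα.2
      have hnm : ¬ f.exitTime e u < H := by
        intro hlt
        have : u ∈ S := ⟨⟨hu0, huα.le⟩, hlt.le⟩
        exact absurd (le_csSup hSbdd this) (not_le.mpr hu.1)
      exact f.aT_inactive hind e ⟨hu0, huH⟩ hnm (f.Act_nonempty_of_lt hH.le hD hu0 huα)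
    have : f.AT e α = f.AT e σ := by
      rw [f.AT_add e σ α,
        integral_eq_mul_of_eqOn (f.aT_integrable e) hσα (c := 0) ha]
      ring
    rw [this]
    exact hfifo

/-- After `α*`, edges with residual capacity run at capacity. -/
lemma saturation (hind : f.InducedBy fun _ θ T e => gbar ν H T e)
    (hν : ∀ e', 0 < ν e') (hτ : ∀ e', 0 < τ e') (hH : 0 < H) (hD : 0 < ∑ j, d j) (e : E) (he : f.astar < H - τ e) :
    f.AT e f.astar + ν e * (H - f.astar - τ e) ≤ f.BT e H := by
  have hfeas := hind.1
  have hα := f.astar_mem_Icc hH.le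
  set α := f.astar with hαdef
  have hq0 : f.queue e α = 0 :=
    f.queue_zero_before hind hν hτ hH hD e he ⟨hα.1, le_rfl⟩
  have hb : ∀ t ∈ Set.Ioo (α + τ e) H, f.bT e t = ν e := by
    intro t ht
    obtain ⟨ht1, ht2⟩ := ht
    have hu1 : α < t - τ e := by linarith
    have hu0 : 0 ≤ t - τ e := hα.1.trans hu1.le
    have huH : t - τ e < H - τ e := by linarith
    have huH' : t - τ e < H := by have := hτ e; linarith
    have huIco : t - τ e ∈ Set.Ico (0:ℝ) (H - τ e) := ⟨hu0, huH⟩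
    have h2 := hfeas.2.1 e (t - τ e) huIco
    by_cases hq : 0 < f.queue e (t - τ e)
    · rw [if_pos hq] at h2
      have ht' : t - τ e + τ e = t := by ring
      rw [ht'] at h2
      exact h2
    · have hqz : f.queue e (t - τ e) = 0 :=
        le_antisymm (not_lt.mp hq) (f.queue_nonneg hfeas e hu0)
      have hact : f.exitTime e (t - τ e) < H := by
        have : f.exitTime e (t - τ e) = (t - τ e) + f.queue e (t - τ e) / ν e + τ e := rfl
        rw [this, hqz]
        simp
        linarith
      have hvlt : f.vact (t - τ e) < ∑ j, d j := f.vact_lt hfeas hν hH.le hu1 huH'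
      have hvpos : 0 < f.vact (t - τ e) := by
        have hmem : e ∈ f.Act (t - τ e) := (f.mem_Act).mpr hact
        have : ν e ≤ f.vact (t - τ e) :=
          Finset.single_le_sum (fun e' _ => (hν e').le) hmem
        linarith [hν e]
      have hage : ν e ≤ f.aT e (t - τ e) := by
        rw [f.aT_active hind e ⟨hu0, huH'⟩ hact]
        calc ν e = ν e * 1 := (mul_one _).symm
          _ ≤ ν e * ((∑ j, d j) / f.vact (t - τ e)) := by
              apply mul_le_mul_of_nonneg_left _ (hν e).le
              exact (one_le_div hvpos).mpr hvlt.le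
          _ = (∑ j, d j) * (ν e / f.vact (t - τ e)) := by ring
      rw [if_neg hq] at h2
      have ht' : t - τ e + τ e = t := by ring
      rw [ht'] at h2
      have hbt : f.bT e t = min (∑ j, f.fin e j (t - τ e)) (ν e) := h2
      exact hbt.trans (min_eq_right hage)
  have hBH : f.BT e H = f.BT e (α + τ e) + ν e * (H - α - τ e) := by
    rw [f.BT_add e (α + τ e) H,
      integral_eq_mul_of_eqOn (f.bT_integrable e) (by linarith) hb]
    ring
  have hBτ : f.BT e (α + τ e) = f.AT e α := by
    have := f.queue_eq e α
    rw [hq0] at this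
    linarith
  rw [hBH, hBτ]

lemma payoff_eq_sum_BT : ∑ j, f.payoff j = ∑ e, f.BT e H := by
  unfold payoff
  rw [Finset.sum_comm]
  exact Finset.sum_congr rfl fun e _ => (f.BT_eq_sum e H).symm

lemma sum_AT (hH : 0 ≤ H) {α : ℝ} (hα : α ∈ Set.Icc (0:ℝ) H) :
    ∑ e, f.AT e α = (∑ j, d j) * α := by
  unfold AT
  rw [← intervalIntegral.integral_finset_sum fun e _ => (f.aT_integrable e).intervalIntegrable]
  have := integral_eq_mul_of_eqOn (g := fun u => ∑ e, f.aT e u)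
    (integrable_finset_sum _ fun e _ => f.aT_integrable e) hα.1 (c := ∑ j, d j) ?_
  · rw [this]; ring
  · intro u hu
    have huH : u ∈ Set.Ico (0:ℝ) H := ⟨hu.1.le, lt_of_lt_of_le hu.2 hα.2⟩
    show ∑ e, f.aT e u = ∑ j, d j
    calc ∑ e, f.aT e u = ∑ e, ∑ j, f.fin e j u := rfl
      _ = ∑ j, ∑ e, f.fin e j u := Finset.sum_comm
      _ = ∑ j, d j := Finset.sum_congr rfl fun j _ => f.conservation j u huH

/-- The cut bound: no feasible flow delivers more than `D·α + ∑_e ν_e (H - α - τ_e)⁺`. -/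
lemma payoff_le_cut (hfeas : f.Feasible) (hν : ∀ e', 0 < ν e') (hH : 0 ≤ H) {α : ℝ}
    (hα : α ∈ Set.Icc (0:ℝ) H) :
    ∑ j, f.payoff j ≤ (∑ j, d j) * α + ∑ e, ν e * max (H - α - τ e) 0 := by
  rw [f.payoff_eq_sum_BT, ← f.sum_AT hH hα, ← Finset.sum_add_distrib]
  apply Finset.sum_le_sum
  intro e _
  by_cases hc : α + τ e < H
  · have hmax : max (H - α - τ e) 0 = H - α - τ e := max_eq_left (by linarith)
    rw [hmax]
    have h1 : f.BT e (α + τ e) ≤ f.AT e α := f.znn hfeas e hα.1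
    have h2 : f.BT e H ≤ f.BT e (α + τ e) + ν e * (H - (α + τ e)) := by
      rw [f.BT_add e (α + τ e) H]
      have := integral_le_mul_of_le_on (f.bT_integrable e) hc.le
        (fun t _ => f.bT_le hfeas e (hν e) t)
      linarith
    have : ν e * (H - (α + τ e)) = ν e * (H - α - τ e) := by ring
    rw [this] at h2
    linarith
  · have hmax : max (H - α - τ e) 0 = 0 := max_eq_right (by linarith [not_lt.mp hc])
    rw [hmax]
    have h1 : f.BT e (α + τ e) ≤ f.AT e α := f.znn hfeas e hα.1
    have h2 : f.BT e H ≤ f.BT e (α + τ e) := f.BT_mono e (not_lt.mp hc)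
    linarith

end FlowOverTime
end Aux3

/-- On a parallel-edge network where the players receive the current
time and exit times as information, if every player uses the strategy `ḡ` (routing
proportionally to the capacities of the active edges), then in the induced feasible flow
over time the total payoff equals the system optimum `Opt`, the value of a maximum flow
over time. -/
theorem gbar_total_payoff_eq_opt
    {E P : Type} [Fintype E] [Fintype P] [Nonempty E]
    (τ ν : E → ℝ) (d : P → ℝ) (H : ℝ)
    (hτ : ∀ e, 0 < τ e) (hν : ∀ e, 0 < ν e) (hd : ∀ j, 0 < d j) (hH : 0 < H)
    (Opt : ℝ)
    (hOpt : IsGreatest {v : ℝ | ∃ f : FlowOverTime E P τ ν d H,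
        f.Feasible ∧ ∑ j, f.payoff j = v} Opt)
    (f : FlowOverTime E P τ ν d H)
    (hf : f.InducedBy (fun _ θ T e => gbar ν H T e)) :
    ∑ j, f.payoff j = Opt := by
  rcases isEmpty_or_nonempty P with hP | hP
  · obtain ⟨f', hf'1, hf'2⟩ := hOpt.1
    rw [Finset.univ_eq_empty, Finset.sum_empty] at hf'2 ⊢
    exact hf'2
  · have hD : 0 < ∑ j, d j := Finset.sum_pos (fun j _ => hd j) Finset.univ_nonempty
    have hle : ∑ j, f.payoff j ≤ Opt := hOpt.2 ⟨f, hf.1, rfl⟩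
    have hα := f.astar_mem_Icc hH.le
    have hlow : (∑ j, d j) * f.astar + ∑ e, ν e * max (H - f.astar - τ e) 0
        ≤ ∑ j, f.payoff j := by
      rw [f.payoff_eq_sum_BT, ← f.sum_AT hH.le hα, ← Finset.sum_add_distrib]
      apply Finset.sum_le_sum
      intro e _
      by_cases hc : f.astar < H - τ e
      · have hmax : max (H - f.astar - τ e) 0 = H - f.astar - τ e :=
          max_eq_left (by linarith)
        rw [hmax]
        exact f.saturation hf hν hτ hH hD e hc
      · have hmax : max (H - f.astar - τ e) 0 = 0 := by
          push_neg at hc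
          exact max_eq_right (by linarith)
        rw [hmax, mul_zero, add_zero]
        exact f.AT_astar_le_BT hf hν hτ hH hD e
    obtain ⟨f', hf'1, hf'2⟩ := hOpt.1
    have hub := f'.payoff_le_cut hf'1 hν hH.le hα
    rw [hf'2] at hub
    linarith
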